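/- Let T_b be the right triangle with vertices (0,0), (1,0), (0,b), 0 < b < 1, and f(x,y) = (cos(πy/b) − cos(πx)) − (1−b)cos(πy/b)cos(πx). Then the Rayleigh quotient of f on T_b equals (3π²((b−1)²+2)(b²+1) − 64(b−1)²(b+1))/(3b²((b−1)²+4)). -/

import Mathlib

open Real MeasureTheory Set

lemma tri_integral (b : ℝ) (hb0 : 0 < b) (hb1 : b < 1) (g : ℝ × ℝ → ℝ) (hg : Continuous g) :
    ∫ p in {p : ℝ × ℝ | 0 ≤ p.1 ∧ 0 ≤ p.2 ∧ b * p.1 + p.2 ≤ b}, g p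
      = ∫ x in (0:ℝ)..1, ∫ y in (0:ℝ)..(b * (1 - x)), g (x, y) := by
  set T : Set (ℝ × ℝ) := {p : ℝ × ℝ | 0 ≤ p.1 ∧ 0 ≤ p.2 ∧ b * p.1 + p.2 ≤ b} with hT
  have hTm : MeasurableSet T := by
    have : T = {p : ℝ × ℝ | 0 ≤ p.1} ∩ ({p : ℝ × ℝ | 0 ≤ p.2} ∩ {p : ℝ × ℝ | b * p.1 + p.2 ≤ b}) := by
      ext p; simp [hT, and_assoc]
    rw [this]
    exact (measurableSet_le measurable_const measurable_fst).inter
      ((measurableSet_le measurable_const measurable_snd).inter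
        (measurableSet_le (by fun_prop) measurable_const))
  have hTsub : T ⊆ Icc ((0:ℝ), (0:ℝ)) (1, b) := by
    rintro ⟨x, y⟩ ⟨h1, h2, h3⟩
    simp only [Icc, Prod.le_def, mem_setOf_eq]
    refine ⟨⟨h1, h2⟩, by nlinarith, by nlinarith⟩
  have hTcl : IsClosed T := by
    have : T = {p : ℝ × ℝ | 0 ≤ p.1} ∩ ({p : ℝ × ℝ | 0 ≤ p.2} ∩ {p : ℝ × ℝ | b * p.1 + p.2 ≤ b}) := by
      ext p; simp [hT, and_assoc]
    rw [this]
    exact (isClosed_le continuous_const continuous_fst).inter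
      ((isClosed_le continuous_const continuous_snd).inter
        (isClosed_le (by fun_prop) continuous_const))
  have hTk : IsCompact T := IsCompact.of_isClosed_subset isCompact_Icc hTcl hTsub
  have hint : IntegrableOn g T := hg.continuousOn.integrableOn_compact hTk
  have h1 : ∫ p in T, g p = ∫ p : ℝ × ℝ, T.indicator g p := (integral_indicator hTm).symm
  rw [h1]
  have h2 : ∫ p : ℝ × ℝ, T.indicator g p
      = ∫ x : ℝ, ∫ y : ℝ, T.indicator g (x, y) := by
    exact integral_prod (T.indicator g) ((integrable_indicator_iff hTm).2 hint)
  rw [h2]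
  have h3 : ∀ x : ℝ, (∫ y : ℝ, T.indicator g (x, y))
      = (Icc (0:ℝ) 1).indicator (fun x => ∫ y in Icc (0:ℝ) (b * (1 - x)), g (x, y)) x := by
    intro x
    by_cases hx : x ∈ Icc (0:ℝ) 1
    · rw [indicator_of_mem hx, ← integral_indicator measurableSet_Icc]
      congr 1 with y
      have : (x, y) ∈ T ↔ y ∈ Icc (0:ℝ) (b * (1 - x)) := by
        simp only [hT, mem_setOf_eq, mem_Icc]
        constructor
        · rintro ⟨-, h2, h3⟩; exact ⟨h2, by nlinarith⟩
        · rintro ⟨h2, h3⟩; exact ⟨hx.1, h2, by nlinarith⟩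
      by_cases hy : (x, y) ∈ T
      · rw [indicator_of_mem hy, indicator_of_mem (this.1 hy)]
      · rw [indicator_of_notMem hy, indicator_of_notMem (fun h => hy (this.2 h))]
    · rw [indicator_of_notMem hx]
      have : ∀ y : ℝ, T.indicator g (x, y) = 0 := by
        intro y
        apply indicator_of_notMem
        rintro ⟨h1, h2, h3⟩
        simp only [mem_Icc, not_and_or, not_le] at hx
        rcases hx with hx | hx
        · exact absurd h1 (not_le.2 hx)
        · nlinarith
      simp [this]
  simp only [h3]
  rw [integral_indicator measurableSet_Icc,
    intervalIntegral.integral_of_le zero_le_one, ← integral_Icc_eq_integral_Ioc]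
  apply setIntegral_congr_fun measurableSet_Icc
  intro x hx
  have hc : (0:ℝ) ≤ b * (1 - x) := by nlinarith [hx.1, hx.2]
  dsimp only
  rw [intervalIntegral.integral_of_le hc, ← integral_Icc_eq_integral_Ioc]

set_option maxHeartbeats 2000000 in
theorem test_function_rayleigh_quotient (b : ℝ) (hb0 : 0 < b) (hb1 : b < 1) :
    let T : Set (ℝ × ℝ) := {p | 0 ≤ p.1 ∧ 0 ≤ p.2 ∧ b * p.1 + p.2 ≤ b}
    let f : ℝ × ℝ → ℝ := fun p =>
      (Real.cos (π * p.2 / b) - Real.cos (π * p.1)) -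
        (1 - b) * (Real.cos (π * p.2 / b) * Real.cos (π * p.1))
    (∫ p in T, ((deriv (fun s => f (s, p.2)) p.1) ^ 2 +
        (deriv (fun t => f (p.1, t)) p.2) ^ 2)) / (∫ p in T, (f p) ^ 2) =
      (3 * π ^ 2 * ((b - 1) ^ 2 + 2) * (b ^ 2 + 1) - 64 * (b - 1) ^ 2 * (b + 1)) /
        (3 * b ^ 2 * ((b - 1) ^ 2 + 4)) := by
  intro T f
  have hb : b ≠ 0 := ne_of_gt hb0
  have hπ : (π : ℝ) ≠ 0 := Real.pi_ne_zero
  -- basic derivative facts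
  have hcx : ∀ x : ℝ, HasDerivAt (fun s : ℝ => Real.cos (π * s)) (-Real.sin (π * x) * π) x :=
    fun x => by
      simpa [Function.comp_def] using (Real.hasDerivAt_cos (π * x)).comp x ((hasDerivAt_id x).const_mul π)
  have hsx : ∀ x : ℝ, HasDerivAt (fun s : ℝ => Real.sin (π * s)) (Real.cos (π * x) * π) x :=
    fun x => by
      simpa [Function.comp_def] using (Real.hasDerivAt_sin (π * x)).comp x ((hasDerivAt_id x).const_mul π)
  have hcy : ∀ y : ℝ, HasDerivAt (fun t : ℝ => Real.cos (π * t / b))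
      (-Real.sin (π * y / b) * (π / b)) y := fun y => by
    simpa [Function.comp_def] using (Real.hasDerivAt_cos (π * y / b)).comp y
      (((hasDerivAt_id y).const_mul π).div_const b)
  have hsy : ∀ y : ℝ, HasDerivAt (fun t : ℝ => Real.sin (π * t / b))
      (Real.cos (π * y / b) * (π / b)) y := fun y => by
    simpa [Function.comp_def] using (Real.hasDerivAt_sin (π * y / b)).comp y
      (((hasDerivAt_id y).const_mul π).div_const b)
  -- the partial derivatives of f
  have hd1 : ∀ x y : ℝ, deriv (fun s => f (s, y)) x
      = π * Real.sin (π * x) * (1 + (1 - b) * Real.cos (π * y / b)) := by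
    intro x y
    have h : HasDerivAt (fun s : ℝ => (Real.cos (π * y / b) - Real.cos (π * s)) -
        (1 - b) * (Real.cos (π * y / b) * Real.cos (π * s)))
        (-(-Real.sin (π * x) * π) -
          (1 - b) * (Real.cos (π * y / b) * (-Real.sin (π * x) * π))) x := by
      exact ((hcx x).const_sub (Real.cos (π * y / b))).sub
        (((hcx x).const_mul (Real.cos (π * y / b))).const_mul (1 - b))
    rw [show (fun s => f (s, y)) = (fun s : ℝ => (Real.cos (π * y / b) - Real.cos (π * s)) -
        (1 - b) * (Real.cos (π * y / b) * Real.cos (π * s))) from rfl, h.deriv]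
    ring
  have hd2 : ∀ x y : ℝ, deriv (fun t => f (x, t)) y
      = -(π / b) * Real.sin (π * y / b) * (1 - (1 - b) * Real.cos (π * x)) := by
    intro x y
    have h : HasDerivAt (fun t : ℝ => (Real.cos (π * t / b) - Real.cos (π * x)) -
        (1 - b) * (Real.cos (π * t / b) * Real.cos (π * x)))
        ((-Real.sin (π * y / b) * (π / b)) -
          (1 - b) * ((-Real.sin (π * y / b) * (π / b)) * Real.cos (π * x))) y := by
      exact ((hcy y).sub_const (Real.cos (π * x))).sub
        (((hcy y).mul_const (Real.cos (π * x))).const_mul (1 - b))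
    rw [show (fun t => f (x, t)) = (fun t : ℝ => (Real.cos (π * t / b) - Real.cos (π * x)) -
        (1 - b) * (Real.cos (π * t / b) * Real.cos (π * x))) from rfl, h.deriv]
    ring
  have hNint : ∀ p : ℝ × ℝ, (deriv (fun s => f (s, p.2)) p.1) ^ 2 +
      (deriv (fun t => f (p.1, t)) p.2) ^ 2
      = (π * Real.sin (π * p.1) * (1 + (1 - b) * Real.cos (π * p.2 / b))) ^ 2 +
        (π / b * Real.sin (π * p.2 / b) * (1 - (1 - b) * Real.cos (π * p.1))) ^ 2 := by
    intro p
    rw [hd1 p.1 p.2, hd2 p.1 p.2]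
    ring
  -- clean antiderivative pieces in the y-direction
  have hS1 : ∀ t : ℝ, HasDerivAt (fun y : ℝ => Real.sin (π * y / b) * (b / π))
      (Real.cos (π * t / b)) t := by
    intro t
    have h := (hsy t).mul_const (b / π)
    convert (config := { preTransparency := .default }) h using 1
    field_simp
  have hSC : ∀ t : ℝ, HasDerivAt
      (fun y : ℝ => Real.sin (π * y / b) * Real.cos (π * y / b) * (b / (2 * π)))
      ((Real.cos (π * t / b) ^ 2 - Real.sin (π * t / b) ^ 2) / 2) t := by
    intro t
    have h := ((hsy t).mul (hcy t)).mul_const (b / (2 * π))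
    convert (config := { preTransparency := .default }) h using 1
    field_simp
    ring
  -- inner integral: numerator
  have hNin : ∀ x : ℝ, (∫ y in (0:ℝ)..(b * (1 - x)),
      ((π * Real.sin (π * x) * (1 + (1 - b) * Real.cos (π * y / b))) ^ 2 +
        (π / b * Real.sin (π * y / b) * (1 - (1 - b) * Real.cos (π * x))) ^ 2))
      = π ^ 2 * b * (1 + (1 - b) ^ 2 / 2) * Real.sin (π * x) ^ 2 * (1 - x)
        + 2 * π * (1 - b) * b * Real.sin (π * x) ^ 3
        - (π * (1 - b) ^ 2 * b / 2) * Real.sin (π * x) ^ 3 * Real.cos (π * x)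
        + (π ^ 2 / (2 * b)) * (1 - (1 - b) * Real.cos (π * x)) ^ 2 * (1 - x)
        + (π / (2 * b)) * (1 - (1 - b) * Real.cos (π * x)) ^ 2 *
            Real.sin (π * x) * Real.cos (π * x) := by
    intro x
    have hA : ∀ t : ℝ, HasDerivAt (fun y : ℝ =>
        π ^ 2 * Real.sin (π * x) ^ 2 * (y + (2 * (1 - b)) * (Real.sin (π * y / b) * (b / π))
          + (1 - b) ^ 2 * (y / 2 + Real.sin (π * y / b) * Real.cos (π * y / b) * (b / (2 * π))))
        + (π / b) ^ 2 * (1 - (1 - b) * Real.cos (π * x)) ^ 2 *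
            (y / 2 - Real.sin (π * y / b) * Real.cos (π * y / b) * (b / (2 * π))))
        ((π * Real.sin (π * x) * (1 + (1 - b) * Real.cos (π * t / b))) ^ 2 +
          (π / b * Real.sin (π * t / b) * (1 - (1 - b) * Real.cos (π * x))) ^ 2) t := by
      intro t
      have hy := Real.sin_sq_add_cos_sq (π * t / b)
      have h := ((((hasDerivAt_id t).add ((hS1 t).const_mul (2 * (1 - b)))).add
          ((((hasDerivAt_id t).div_const 2).add (hSC t)).const_mul
          ((1 - b) ^ 2))).const_mul (π ^ 2 * Real.sin (π * x) ^ 2)).add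
          ((((hasDerivAt_id t).div_const 2).sub (hSC t)).const_mul
          ((π / b) ^ 2 * (1 - (1 - b) * Real.cos (π * x)) ^ 2))
      convert (config := { preTransparency := .default }) h using 1
      linear_combination (π ^ 2 * Real.sin (π * x) ^ 2 * (1 - b) ^ 2 / 2
          + (π / b) ^ 2 * (1 - (1 - b) * Real.cos (π * x)) ^ 2 / 2) * hy
    rw [intervalIntegral.integral_eq_sub_of_hasDerivAt (fun t _ => hA t)
      ((Continuous.intervalIntegrable (by fun_prop) _ _))]
    have harg : π * (b * (1 - x)) / b = π - π * x := by field_simp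
    rw [harg, Real.sin_pi_sub, Real.cos_pi_sub]
    simp only [mul_zero, zero_div, Real.sin_zero, Real.cos_zero, zero_mul, zero_add, zero_sub,
      add_zero, sub_zero]
    field_simp
    ring
  -- inner integral: denominator
  have hDin : ∀ x : ℝ, (∫ y in (0:ℝ)..(b * (1 - x)),
      ((Real.cos (π * y / b) - Real.cos (π * x)) -
        (1 - b) * (Real.cos (π * y / b) * Real.cos (π * x))) ^ 2)
      = (b / 2) * (1 - (1 - b) * Real.cos (π * x)) ^ 2 * (1 - x)
        - (b / (2 * π)) * (1 - (1 - b) * Real.cos (π * x)) ^ 2 *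
            Real.sin (π * x) * Real.cos (π * x)
        - (2 * b / π) * (1 - (1 - b) * Real.cos (π * x)) * Real.cos (π * x) * Real.sin (π * x)
        + b * Real.cos (π * x) ^ 2 * (1 - x) := by
    intro x
    have hA : ∀ t : ℝ, HasDerivAt (fun y : ℝ =>
        (1 - (1 - b) * Real.cos (π * x)) ^ 2 *
            (y / 2 + Real.sin (π * y / b) * Real.cos (π * y / b) * (b / (2 * π)))
          - (2 * (1 - (1 - b) * Real.cos (π * x)) * Real.cos (π * x)) *
              (Real.sin (π * y / b) * (b / π))
          + Real.cos (π * x) ^ 2 * y)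
        (((Real.cos (π * t / b) - Real.cos (π * x)) -
          (1 - b) * (Real.cos (π * t / b) * Real.cos (π * x))) ^ 2) t := by
      intro t
      have hy := Real.sin_sq_add_cos_sq (π * t / b)
      have h := (((((hasDerivAt_id t).div_const 2).add (hSC t)).const_mul
          ((1 - (1 - b) * Real.cos (π * x)) ^ 2)).sub
          ((hS1 t).const_mul (2 * (1 - (1 - b) * Real.cos (π * x)) * Real.cos (π * x)))).add
          ((hasDerivAt_id t).const_mul (Real.cos (π * x) ^ 2))
      convert (config := { preTransparency := .default }) h using 1
      linear_combination ((1 - (1 - b) * Real.cos (π * x)) ^ 2 / 2) * hy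
    rw [intervalIntegral.integral_eq_sub_of_hasDerivAt (fun t _ => hA t)
      ((Continuous.intervalIntegrable (by fun_prop) _ _))]
    have harg : π * (b * (1 - x)) / b = π - π * x := by field_simp
    rw [harg, Real.sin_pi_sub, Real.cos_pi_sub]
    simp only [mul_zero, zero_div, Real.sin_zero, Real.cos_zero, zero_mul, zero_add, zero_sub,
      add_zero, sub_zero]
    field_simp
    ring
  -- antiderivative blocks in the x-direction
  have hB1 : ∀ x : ℝ, HasDerivAt (fun x : ℝ => x - x ^ 2 / 2) (1 - x) x := by
    intro x
    have h := (hasDerivAt_id x).sub ((hasDerivAt_pow 2 x).div_const 2)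
    convert (config := { preTransparency := .default }) h using 1
    norm_num
  have hB2 : ∀ x : ℝ, HasDerivAt
      (fun x : ℝ => (1 - x) * Real.sin (π * x) / π - Real.cos (π * x) / π ^ 2)
      ((1 - x) * Real.cos (π * x)) x := by
    intro x
    have h := ((((hasDerivAt_id x).const_sub 1).mul (hsx x)).div_const π).sub
      ((hcx x).div_const (π ^ 2))
    convert (config := { preTransparency := .default }) h using 1
    simp only [id]
    field_simp
    ring
  have hB3 : ∀ x : ℝ, HasDerivAt
      (fun x : ℝ => (1 - x) * (x / 2 + Real.sin (π * x) * Real.cos (π * x) / (2 * π))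
        + x ^ 2 / 4 - Real.cos (π * x) ^ 2 / (4 * π ^ 2))
      ((1 - x) * (1 / 2 + (Real.cos (π * x) ^ 2 - Real.sin (π * x) ^ 2) / 2)) x := by
    intro x
    have h := ((((hasDerivAt_id x).const_sub 1).mul (((hasDerivAt_id x).div_const 2).add
      (((hsx x).mul (hcx x)).div_const (2 * π)))).add
      ((hasDerivAt_pow 2 x).div_const 4)).sub (((hcx x).pow 2).div_const (4 * π ^ 2))
    convert (config := { preTransparency := .default }) h using 1
    simp only [id, Pi.add_apply, Pi.mul_apply, Pi.pow_apply]
    field_simp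
    ring
  have hB4 : ∀ x : ℝ, HasDerivAt (fun x : ℝ => -Real.cos (π * x) ^ 2 / (2 * π))
      (Real.sin (π * x) * Real.cos (π * x)) x := by
    intro x
    have h := (((hcx x).pow 2).div_const (2 * π)).neg
    convert (config := { preTransparency := .default }) h using 1
    · funext u; simp only [Pi.neg_apply, Pi.pow_apply]; ring
    · field_simp
      ring
  have hB5 : ∀ x : ℝ, HasDerivAt (fun x : ℝ => -Real.cos (π * x) / π)
      (Real.sin (π * x)) x := by
    intro x
    have h := ((hcx x).div_const π).neg
    convert (config := { preTransparency := .default }) h using 1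
    · funext u; simp only [Pi.neg_apply, Pi.pow_apply]; ring
    · field_simp
  have hB6 : ∀ x : ℝ, HasDerivAt (fun x : ℝ => -Real.cos (π * x) ^ 3 / (3 * π))
      (Real.sin (π * x) * Real.cos (π * x) ^ 2) x := by
    intro x
    have h := (((hcx x).pow 3).div_const (3 * π)).neg
    convert (config := { preTransparency := .default }) h using 1
    · funext u; simp only [Pi.neg_apply, Pi.pow_apply]; ring
    · field_simp
      ring
  have hB7 : ∀ x : ℝ, HasDerivAt (fun x : ℝ => -Real.cos (π * x) ^ 4 / (4 * π))
      (Real.sin (π * x) * Real.cos (π * x) ^ 3) x := by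
    intro x
    have h := (((hcx x).pow 4).div_const (4 * π)).neg
    convert (config := { preTransparency := .default }) h using 1
    · funext u; simp only [Pi.neg_apply, Pi.pow_apply]; ring
    · field_simp
      ring
  -- outer integral: numerator
  have hGn : ∀ x : ℝ, HasDerivAt (fun x : ℝ =>
      (π ^ 2 * b * (1 + (1 - b) ^ 2 / 2)) * ((x - x ^ 2 / 2) -
        ((1 - x) * (x / 2 + Real.sin (π * x) * Real.cos (π * x) / (2 * π))
          + x ^ 2 / 4 - Real.cos (π * x) ^ 2 / (4 * π ^ 2)))
      + (2 * π * (1 - b) * b) * ((-Real.cos (π * x) / π) - (-Real.cos (π * x) ^ 3 / (3 * π)))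
      - (π * (1 - b) ^ 2 * b / 2) *
          ((-Real.cos (π * x) ^ 2 / (2 * π)) - (-Real.cos (π * x) ^ 4 / (4 * π)))
      + (π ^ 2 / (2 * b)) * ((x - x ^ 2 / 2)
          - (2 * (1 - b)) * ((1 - x) * Real.sin (π * x) / π - Real.cos (π * x) / π ^ 2)
          + (1 - b) ^ 2 * ((1 - x) * (x / 2 + Real.sin (π * x) * Real.cos (π * x) / (2 * π))
              + x ^ 2 / 4 - Real.cos (π * x) ^ 2 / (4 * π ^ 2)))
      + (π / (2 * b)) * ((-Real.cos (π * x) ^ 2 / (2 * π))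
          - (2 * (1 - b)) * (-Real.cos (π * x) ^ 3 / (3 * π))
          + (1 - b) ^ 2 * (-Real.cos (π * x) ^ 4 / (4 * π))))
      (π ^ 2 * b * (1 + (1 - b) ^ 2 / 2) * Real.sin (π * x) ^ 2 * (1 - x)
        + 2 * π * (1 - b) * b * Real.sin (π * x) ^ 3
        - (π * (1 - b) ^ 2 * b / 2) * Real.sin (π * x) ^ 3 * Real.cos (π * x)
        + (π ^ 2 / (2 * b)) * (1 - (1 - b) * Real.cos (π * x)) ^ 2 * (1 - x)
        + (π / (2 * b)) * (1 - (1 - b) * Real.cos (π * x)) ^ 2 *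
            Real.sin (π * x) * Real.cos (π * x)) x := by
    intro x
    have hsc := Real.sin_sq_add_cos_sq (π * x)
    have h := ((((((hB1 x).sub (hB3 x)).const_mul (π ^ 2 * b * (1 + (1 - b) ^ 2 / 2))).add
        (((hB5 x).sub (hB6 x)).const_mul (2 * π * (1 - b) * b))).sub
        (((hB4 x).sub (hB7 x)).const_mul (π * (1 - b) ^ 2 * b / 2))).add
        ((((hB1 x).sub ((hB2 x).const_mul (2 * (1 - b)))).add
          ((hB3 x).const_mul ((1 - b) ^ 2))).const_mul (π ^ 2 / (2 * b)))).add
        ((((hB4 x).sub ((hB6 x).const_mul (2 * (1 - b)))).add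
          ((hB7 x).const_mul ((1 - b) ^ 2))).const_mul (π / (2 * b)))
    convert (config := { preTransparency := .default }) h using 1
    linear_combination (π ^ 2 * b * (1 + (1 - b) ^ 2 / 2) * (1 - x) / 2
      + 2 * π * (1 - b) * b * Real.sin (π * x)
      - (π * (1 - b) ^ 2 * b / 2) * Real.sin (π * x) * Real.cos (π * x)
      + (π ^ 2 * (1 - b) ^ 2 / (4 * b)) * (1 - x)) * hsc
  have hNout : (∫ x in (0:ℝ)..1,
      (π ^ 2 * b * (1 + (1 - b) ^ 2 / 2) * Real.sin (π * x) ^ 2 * (1 - x)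
        + 2 * π * (1 - b) * b * Real.sin (π * x) ^ 3
        - (π * (1 - b) ^ 2 * b / 2) * Real.sin (π * x) ^ 3 * Real.cos (π * x)
        + (π ^ 2 / (2 * b)) * (1 - (1 - b) * Real.cos (π * x)) ^ 2 * (1 - x)
        + (π / (2 * b)) * (1 - (1 - b) * Real.cos (π * x)) ^ 2 *
            Real.sin (π * x) * Real.cos (π * x)))
      = (3 * π ^ 2 * ((b - 1) ^ 2 + 2) * (b ^ 2 + 1) - 64 * (b - 1) ^ 2 * (b + 1)) / (24 * b) := by
    rw [intervalIntegral.integral_eq_sub_of_hasDerivAt (fun x _ => hGn x)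
      ((Continuous.intervalIntegrable (by fun_prop) _ _))]
    norm_num [Real.sin_pi, Real.cos_pi, Real.sin_zero, Real.cos_zero]
    field_simp
    ring
  -- outer integral: denominator
  have hGd : ∀ x : ℝ, HasDerivAt (fun x : ℝ =>
      (b / 2) * (x - x ^ 2 / 2)
      - (b * (1 - b)) * ((1 - x) * Real.sin (π * x) / π - Real.cos (π * x) / π ^ 2)
      + (b * (1 - b) ^ 2 / 2 + b) *
          ((1 - x) * (x / 2 + Real.sin (π * x) * Real.cos (π * x) / (2 * π))
            + x ^ 2 / 4 - Real.cos (π * x) ^ 2 / (4 * π ^ 2))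
      - (5 * b / (2 * π)) * (-Real.cos (π * x) ^ 2 / (2 * π))
      + (3 * b * (1 - b) / π) * (-Real.cos (π * x) ^ 3 / (3 * π))
      - (b * (1 - b) ^ 2 / (2 * π)) * (-Real.cos (π * x) ^ 4 / (4 * π)))
      ((b / 2) * (1 - (1 - b) * Real.cos (π * x)) ^ 2 * (1 - x)
        - (b / (2 * π)) * (1 - (1 - b) * Real.cos (π * x)) ^ 2 *
            Real.sin (π * x) * Real.cos (π * x)
        - (2 * b / π) * (1 - (1 - b) * Real.cos (π * x)) * Real.cos (π * x) * Real.sin (π * x)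
        + b * Real.cos (π * x) ^ 2 * (1 - x)) x := by
    intro x
    have hsc := Real.sin_sq_add_cos_sq (π * x)
    have h := ((((((hB1 x).const_mul (b / 2)).sub
        ((hB2 x).const_mul (b * (1 - b)))).add
        ((hB3 x).const_mul (b * (1 - b) ^ 2 / 2 + b))).sub
        ((hB4 x).const_mul (5 * b / (2 * π)))).add
        ((hB6 x).const_mul (3 * b * (1 - b) / π))).sub
        ((hB7 x).const_mul (b * (1 - b) ^ 2 / (2 * π)))
    convert (config := { preTransparency := .default }) h using 1
    linear_combination ((b * (1 - b) ^ 2 / 2 + b) * (1 - x) / 2) * hsc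
  have hDout : (∫ x in (0:ℝ)..1,
      ((b / 2) * (1 - (1 - b) * Real.cos (π * x)) ^ 2 * (1 - x)
        - (b / (2 * π)) * (1 - (1 - b) * Real.cos (π * x)) ^ 2 *
            Real.sin (π * x) * Real.cos (π * x)
        - (2 * b / π) * (1 - (1 - b) * Real.cos (π * x)) * Real.cos (π * x) * Real.sin (π * x)
        + b * Real.cos (π * x) ^ 2 * (1 - x)))
      = b * ((b - 1) ^ 2 + 4) / 8 := by
    rw [intervalIntegral.integral_eq_sub_of_hasDerivAt (fun x _ => hGd x)
      ((Continuous.intervalIntegrable (by fun_prop) _ _))]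
    norm_num [Real.sin_pi, Real.cos_pi, Real.sin_zero, Real.cos_zero]
    field_simp
    ring
  -- assemble
  have hnum : (∫ p in T, ((deriv (fun s => f (s, p.2)) p.1) ^ 2 +
      (deriv (fun t => f (p.1, t)) p.2) ^ 2))
      = (3 * π ^ 2 * ((b - 1) ^ 2 + 2) * (b ^ 2 + 1) - 64 * (b - 1) ^ 2 * (b + 1)) / (24 * b) := by
    rw [show (fun p : ℝ × ℝ => (deriv (fun s => f (s, p.2)) p.1) ^ 2 +
        (deriv (fun t => f (p.1, t)) p.2) ^ 2)
      = fun p : ℝ × ℝ => (π * Real.sin (π * p.1) * (1 + (1 - b) * Real.cos (π * p.2 / b))) ^ 2 +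
        (π / b * Real.sin (π * p.2 / b) * (1 - (1 - b) * Real.cos (π * p.1))) ^ 2
      from funext hNint]
    rw [tri_integral b hb0 hb1 _ (by fun_prop)]
    simp only [hNin]
    exact hNout
  have hden : (∫ p in T, (f p) ^ 2) = b * ((b - 1) ^ 2 + 4) / 8 := by
    rw [show (fun p : ℝ × ℝ => (f p) ^ 2)
      = fun p : ℝ × ℝ => ((Real.cos (π * p.2 / b) - Real.cos (π * p.1)) -
          (1 - b) * (Real.cos (π * p.2 / b) * Real.cos (π * p.1))) ^ 2 from rfl]
    rw [tri_integral b hb0 hb1 _ (by fun_prop)]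
    simp only [hDin]
    exact hDout
  rw [hnum, hden]
  have h4 : ((b:ℝ) - 1) ^ 2 + 4 ≠ 0 := by positivity
  field_simp
  ring
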